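/- arXiv:2509.04364 — 2 statements merged into one kernel-verified Lean document; each statement's English description precedes it below -/
import Mathlib

section
/- Let I be an ideal of S such that in_{x_n}(I) = C(x_n,I) ∩ (N(x_n,I) + (x_n)) is a nondegenerate geometric vertex decomposition and suppose N(x_n,I) has no embedded primes. Then for each u ∈ C(x_n,I) with no term divisible by x_n, there exists s ∈ S with no term divisible by x_n such that x_n·u + s ∈ I. -/
open MvPolynomial

/-- The trace map on a polynomial ring: on a monomial `m`, it returns
`(m·x_1⋯x_n)^{1/p}/(x_1⋯x_n)` if `m·x_1⋯x_n` is a `p`-th power of a monomial,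
and `0` otherwise, extended `κ`-linearly. -/
noncomputable def Tr (κ : Type*) [CommSemiring κ] {σ : Type*} [Fintype σ] [DecidableEq σ]
    (p : ℕ) (f : MvPolynomial σ κ) : MvPolynomial σ κ :=
  ∑ b ∈ f.support,
    if ∀ i : σ, (b i + 1) % p = 0 then
      MvPolynomial.monomial (Finsupp.equivFunOnFinite.symm fun i => (b i + 1) / p - 1) (f.coeff b)
    else 0

/-- A Frobenius splitting: an additive map `φ` with `φ(a^p·b) = a·φ(b)` and `φ(1) = 1`. -/
def IsFrobSplitting {R : Type*} [CommSemiring R] (p : ℕ) (φ : R → R) : Prop :=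
  (∀ a b : R, φ (a + b) = φ a + φ b) ∧ (∀ a b : R, φ (a ^ p * b) = a * φ b) ∧ φ 1 = 1

/-- `φ` compatibly splits the ideal `I` if `φ(I) ⊆ I`. -/
def CompatiblySplits {R : Type*} [CommSemiring R] (φ : R → R) (I : Ideal R) : Prop :=
  ∀ a ∈ I, φ a ∈ I

/-- `f` has no term divisible by the variable `y`. -/
def NoVar {κ : Type*} [CommSemiring κ] {σ : Type*} (y : σ) (f : MvPolynomial σ κ) : Prop :=
  ∀ b ∈ f.support, (b : σ →₀ ℕ) y = 0

/-- `in_y(f)`: the sum of the terms of `f` of highest degree in the variable `y`. -/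
noncomputable def inY {κ : Type*} [CommSemiring κ] {σ : Type*} [DecidableEq σ]
    (y : σ) (f : MvPolynomial σ κ) : MvPolynomial σ κ :=
  ∑ b ∈ f.support,
    if (b : σ →₀ ℕ) y = f.degreeOf y then MvPolynomial.monomial b (f.coeff b) else 0

/-- `in_y(I)`, the ideal generated by `in_y(f)` for `f ∈ I`. -/
noncomputable def inYIdeal {κ : Type*} [CommSemiring κ] {σ : Type*} [DecidableEq σ]
    (y : σ) (I : Ideal (MvPolynomial σ κ)) : Ideal (MvPolynomial σ κ) :=
  Ideal.span { g | ∃ f ∈ I, g = inY y f }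

/-- The saturation `J : x^∞`. -/
def satPow {R : Type*} [CommRing R] (J : Ideal R) (x : R) : Ideal R where
  carrier := { f | ∃ k : ℕ, x ^ k * f ∈ J }
  zero_mem' := ⟨0, by simp⟩
  add_mem' := by
    rintro a b ⟨k, hk⟩ ⟨l, hl⟩
    refine ⟨k + l, ?_⟩
    have h := J.add_mem (J.mul_mem_left (x ^ l) hk) (J.mul_mem_left (x ^ k) hl)
    have e : x ^ (k + l) * (a + b) = x ^ l * (x ^ k * a) + x ^ k * (x ^ l * b) := by ring
    rwa [e]
  smul_mem' := by
    rintro c a ⟨k, hk⟩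
    refine ⟨k, ?_⟩
    have h := J.mul_mem_left c hk
    have e : x ^ k * (c • a) = c * (x ^ k * a) := by
      simp [smul_eq_mul]; ring
    rwa [e]

/-- `C(y,I) = in_y(I) : y^∞`. -/
noncomputable def Cyd {κ : Type*} [Field κ] {σ : Type*} [DecidableEq σ]
    (y : σ) (I : Ideal (MvPolynomial σ κ)) : Ideal (MvPolynomial σ κ) :=
  satPow (inYIdeal y I) (X y)

/-- `N(y,I)`, the ideal generated by the elements of `I` having no term divisible by `y`. -/
noncomputable def Nyd {κ : Type*} [Field κ] {σ : Type*} (y : σ) (I : Ideal (MvPolynomial σ κ)) :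
    Ideal (MvPolynomial σ κ) :=
  Ideal.span { f | f ∈ I ∧ NoVar y f }

/-- `I` admits a geometric vertex decomposition at `y`. -/
def IsGVD {κ : Type*} [Field κ] {σ : Type*} [DecidableEq σ]
    (y : σ) (I : Ideal (MvPolynomial σ κ)) : Prop :=
  inYIdeal y I = Cyd y I ⊓ (Nyd y I + Ideal.span {X y}) ∧
    ((Cyd y I).radical = (Nyd y I).radical ∨
      ∀ P ∈ (Cyd y I).minimalPrimes, P ∉ (Nyd y I).minimalPrimes)

/-- A nondegenerate geometric vertex decomposition. -/
def IsNondegGVD {κ : Type*} [Field κ] {σ : Type*} [DecidableEq σ]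
    (y : σ) (I : Ideal (MvPolynomial σ κ)) : Prop :=
  IsGVD y I ∧ Cyd y I ≠ ⊤ ∧ (Cyd y I).radical ≠ (Nyd y I).radical

/-- A degenerate geometric vertex decomposition. -/
def IsDegenGVD {κ : Type*} [Field κ] {σ : Type*} [DecidableEq σ]
    (y : σ) (I : Ideal (MvPolynomial σ κ)) : Prop :=
  IsGVD y I ∧ (Cyd y I = ⊤ ∨ (Cyd y I).radical = (Nyd y I).radical)

/-- The ideal `N` has no embedded primes: every associated prime is minimal. -/
def NoEmbeddedPrimes {R : Type*} [CommRing R] (N : Ideal R) : Prop :=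
  associatedPrimes R (R ⧸ N) ⊆ N.minimalPrimes

/-- `q` is a nonzerodivisor modulo `N`. -/
def NZDMod {R : Type*} [CommRing R] (N : Ideal R) (q : R) : Prop :=
  ∀ a : R, q * a ∈ N → a ∈ N

namespace GVDAux
variable {κ : Type*} [CommSemiring κ] {σ : Type*} [DecidableEq σ]

noncomputable def psi (y : σ) : MvPolynomial σ κ →ₐ[κ] Polynomial (MvPolynomial σ κ) :=
  MvPolynomial.aeval fun i =>
    if i = y then Polynomial.C (X i) * Polynomial.X else Polynomial.C (X i)

lemma psi_monomial (y : σ) (v : σ →₀ ℕ) (c : κ) :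
    psi y (monomial v c) = Polynomial.C (monomial v c) * Polynomial.X ^ (v y) := by
  classical
  rw [psi, aeval_monomial]
  have h1 : (v.prod fun i k =>
      ((if i = y then Polynomial.C (X i) * Polynomial.X else Polynomial.C (X i)) :
        Polynomial (MvPolynomial σ κ)) ^ k)
      = Polynomial.C (v.prod fun i k => (X i : MvPolynomial σ κ) ^ k)
        * Polynomial.X ^ (v y) := by
    rw [Finsupp.prod, Finsupp.prod]
    have h2 : ∀ i ∈ v.support,
        ((if i = y then Polynomial.C (X i) * Polynomial.X else Polynomial.C (X i)) :
          Polynomial (MvPolynomial σ κ)) ^ (v i)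
        = Polynomial.C ((X i : MvPolynomial σ κ) ^ (v i))
            * Polynomial.X ^ (if i = y then v i else 0) := by
      intro i _
      by_cases h : i = y <;> simp [h, mul_pow, map_pow]
    rw [Finset.prod_congr rfl h2, Finset.prod_mul_distrib, ← map_prod,
      Finset.prod_pow_eq_pow_sum]
    congr 2
    rw [Finset.sum_ite_eq' v.support y (fun i => v i)]
    by_cases hy : y ∈ v.support
    · simp [hy]
    · simp [hy, Finsupp.notMem_support_iff.mp hy]
  rw [h1, monomial_eq]
  show Polynomial.C (C c) * _ = _
  rw [← mul_assoc, ← map_mul]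

lemma psi_apply (y : σ) (f : MvPolynomial σ κ) :
    psi y f = ∑ v ∈ f.support, Polynomial.C (monomial v (coeff v f)) * Polynomial.X ^ (v y) := by
  conv_lhs => rw [f.as_sum, map_sum]
  exact Finset.sum_congr rfl fun v _ => psi_monomial y v (coeff v f)

noncomputable def comp (y : σ) (k : ℕ) (f : MvPolynomial σ κ) : MvPolynomial σ κ :=
  (psi y f).coeff k

lemma comp_eq_sum (y : σ) (k : ℕ) (f : MvPolynomial σ κ) :
    comp y k f = ∑ v ∈ f.support, if v y = k then monomial v (coeff v f) else 0 := by
  rw [comp, psi_apply, Polynomial.finset_sum_coeff]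
  refine Finset.sum_congr rfl fun v _ => ?_
  simp [Polynomial.coeff_C_mul, Polynomial.coeff_X_pow, mul_ite, mul_one, mul_zero, eq_comm]

lemma coeff_comp (y : σ) (k : ℕ) (f : MvPolynomial σ κ) (b : σ →₀ ℕ) :
    coeff b (comp y k f) = if b y = k then coeff b f else 0 := by
  classical
  rw [comp_eq_sum, coeff_sum]
  have h : ∀ v ∈ f.support, (coeff b (if v y = k then monomial v (coeff v f) else 0))
      = if v = b then (if b y = k then coeff b f else 0) else 0 := by
    intro v _
    by_cases h1 : v = b
    · subst h1; by_cases h2 : v y = k <;> simp [h2, coeff_monomial]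
    · by_cases h2 : v y = k <;> simp [h2, coeff_monomial, h1]
  rw [Finset.sum_congr rfl h, Finset.sum_ite_eq' f.support b]
  by_cases hb : b ∈ f.support
  · simp [hb]
  · simp [hb, MvPolynomial.notMem_support_iff.mp hb]

lemma comp_sum (y : σ) (k : ℕ) {ι : Type*} (s : Finset ι) (f : ι → MvPolynomial σ κ) :
    comp y k (∑ i ∈ s, f i) = ∑ i ∈ s, comp y k (f i) := by
  simp only [comp, map_sum, Polynomial.finset_sum_coeff]

lemma comp_homog (y : σ) (k : ℕ) (f : MvPolynomial σ κ) :
    ∀ b ∈ (comp y k f).support, b y = k := by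
  intro b hb
  have := MvPolynomial.mem_support_iff.mp hb
  rw [coeff_comp] at this
  by_contra h
  simp [h] at this

lemma comp_of_homog (y : σ) (k : ℕ) {f : MvPolynomial σ κ}
    (h : ∀ b ∈ f.support, b y = k) : comp y k f = f := by
  ext b
  rw [coeff_comp]
  by_cases hb : b y = k
  · simp [hb]
  · have : b ∉ f.support := fun hc => hb (h b hc)
    simp [hb, MvPolynomial.notMem_support_iff.mp this]

lemma comp_eq_zero_of (y : σ) (k : ℕ) {f : MvPolynomial σ κ}
    (h : ∀ b ∈ f.support, b y ≠ k) : comp y k f = 0 := by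
  ext b
  rw [coeff_comp]
  by_cases hb : b y = k
  · have : b ∉ f.support := fun hc => h b hc hb
    simp [hb, MvPolynomial.notMem_support_iff.mp this]
  · simp [hb]

lemma le_degreeOf' (y : σ) {f : MvPolynomial σ κ} {b : σ →₀ ℕ} (hb : b ∈ f.support) :
    b y ≤ degreeOf y f := by
  rw [degreeOf_eq_sup]
  exact Finset.le_sup (f := fun m => m y) hb

lemma psi_of_homog (y : σ) (d : ℕ) {f : MvPolynomial σ κ}
    (h : ∀ b ∈ f.support, b y = d) :
    psi y f = Polynomial.C f * Polynomial.X ^ d := by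
  refine Polynomial.ext fun k => ?_
  rw [Polynomial.coeff_C_mul, Polynomial.coeff_X_pow, mul_ite, mul_one, mul_zero]
  show comp y k f = _
  by_cases hk : d = k
  · subst hk
    rw [if_pos rfl]
    exact comp_of_homog y d h
  · rw [if_neg (fun hc : k = d => hk hc.symm)]
    exact comp_eq_zero_of y k (fun b hb => by rw [h b hb]; exact fun hc => hk hc)

lemma comp_decomp (y : σ) {f : MvPolynomial σ κ} (h : degreeOf y f ≤ 1) :
    f = comp y 0 f + comp y 1 f := by
  ext b
  rw [coeff_add, coeff_comp, coeff_comp]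
  by_cases h0 : b y = 0
  · simp [h0]
  by_cases h1 : b y = 1
  · simp [h1, h0]
  · have hz : coeff b f = 0 := by
      by_contra hc
      have := le_degreeOf' y (MvPolynomial.mem_support_iff.mpr hc)
      omega
    simp [h0, h1, hz]

lemma inY_eq_comp (y : σ) (f : MvPolynomial σ κ) :
    inY y f = comp y (degreeOf y f) f := by
  rw [inY, comp_eq_sum]

lemma novar_mul (y : σ) {a b : MvPolynomial σ κ} (ha : NoVar y a) (hb : NoVar y b) :
    NoVar y (a * b) := by
  intro c hc
  obtain ⟨u, hu, v, hv, rfl⟩ := Finset.mem_add.mp (MvPolynomial.support_mul a b hc)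
  rw [Finsupp.add_apply, ha u hu, hb v hv]

lemma novar_sum (y : σ) {ι : Type*} (s : Finset ι) (f : ι → MvPolynomial σ κ)
    (h : ∀ i ∈ s, NoVar y (f i)) : NoVar y (∑ i ∈ s, f i) := by
  intro b hb
  obtain ⟨i, hi, hbi⟩ := Finset.mem_biUnion.mp (MvPolynomial.support_sum hb)
  exact h i hi b hbi

lemma novar_comp0 (y : σ) (f : MvPolynomial σ κ) : NoVar y (comp y 0 f) :=
  comp_homog y 0 f

lemma key (y : σ) {I : Ideal (MvPolynomial σ κ)} (c : MvPolynomial σ κ)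
    {f : MvPolynomial σ κ} (hf : f ∈ I) :
    ∃ F ∈ I, ∃ s, NoVar y s ∧ comp y 1 (c * inY y f) + s = F := by
  rcases Nat.lt_or_ge (degreeOf y f) 2 with hd | hd
  · interval_cases hd' : degreeOf y f
    · -- degree 0
      have hhom : ∀ b ∈ f.support, b y = 0 := fun b hb => by
        have := le_degreeOf' y hb; omega
      have h1 : inY y f = f := by rw [inY_eq_comp, hd', comp_of_homog y 0 hhom]
      refine ⟨comp y 1 c * f, Ideal.mul_mem_left _ _ hf, 0, by simp [NoVar], ?_⟩
      rw [add_zero, h1, comp]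
      rw [map_mul, psi_of_homog y 0 hhom, pow_zero, mul_one, Polynomial.coeff_mul_C]
      rfl
    · -- degree 1
      set g := inY y f with hg
      have hgc : g = comp y 1 f := by rw [hg, inY_eq_comp, hd']
      have hdec : f = comp y 0 f + g := by rw [hgc]; exact comp_decomp y (le_of_eq hd')
      refine ⟨comp y 0 c * f, Ideal.mul_mem_left _ _ hf,
        comp y 0 c * comp y 0 f, novar_mul y (novar_comp0 y c) (novar_comp0 y f), ?_⟩
      have hgh : ∀ b ∈ g.support, b y = 1 := fun b hb => comp_homog y 1 f b (hgc ▸ hb)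
      have h2 : comp y 1 (c * g) = comp y 0 c * g := by
        rw [comp, map_mul, psi_of_homog y 1 (f := g) hgh, pow_one, ← mul_assoc]
        rw [show (1 : ℕ) = 0 + 1 from rfl, Polynomial.coeff_mul_X,
          Polynomial.coeff_mul_C]
        rfl
      rw [h2, ← mul_add, add_comm g (comp y 0 f), ← hdec]
  · -- degree ≥ 2
    refine ⟨0, I.zero_mem, 0, by simp [NoVar], ?_⟩
    rw [add_zero, comp_eq_zero_of]
    intro b hb
    obtain ⟨u, hu, v, hv, rfl⟩ := Finset.mem_add.mp (MvPolynomial.support_mul _ _ hb)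
    have hv1 : v y = degreeOf y f := by
      rw [inY_eq_comp] at hv
      exact comp_homog y _ f v hv
    rw [Finsupp.add_apply]
    omega

end GVDAux

/-- Part (4): for each `u ∈ C(x_n,I)` with no term divisible by `x_n`, there is `s`
with no term divisible by `x_n` such that `x_n·u + s ∈ I`. -/
theorem gvd_part4 {p : ℕ} [Fact p.Prime] {κ : Type*} [Field κ] [CharP κ p] [PerfectRing κ p]
    {n : ℕ} (I : Ideal (MvPolynomial (Fin (n + 1)) κ))
    (hgvd : IsNondegGVD (Fin.last n) I)
    (hemb : NoEmbeddedPrimes (Nyd (Fin.last n) I)) :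
    ∀ u ∈ Cyd (Fin.last n) I, NoVar (Fin.last n) u →
      ∃ s : MvPolynomial (Fin (n + 1)) κ, NoVar (Fin.last n) s ∧
        X (Fin.last n) * u + s ∈ I := by
  classical
  intro u hu hnov
  set y := Fin.last n with hy_def
  have hy : X y * u ∈ inYIdeal y I := by
    rw [hgvd.1.1]
    refine Submodule.mem_inf.mpr ⟨Ideal.mul_mem_left _ _ hu, Submodule.mem_sup_right ?_⟩
    exact Ideal.mul_mem_right _ _ (Ideal.subset_span (Set.mem_singleton _))
  rw [inYIdeal] at hy
  obtain ⟨m, cc, g, hsum⟩ := Submodule.mem_span_set'.mp hy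
  have hrep : ∀ i : Fin m, ∃ F ∈ I, ∃ s, NoVar y s ∧
      GVDAux.comp y 1 (cc i * (g i : MvPolynomial (Fin (n + 1)) κ)) + s = F := by
    intro i
    obtain ⟨f, hfI, hf⟩ := (g i).2
    rw [hf]
    exact GVDAux.key y (cc i) hfI
  choose F hFI s hsNoVar hFs using hrep
  refine ⟨∑ i, s i, GVDAux.novar_sum y _ _ (fun i _ => hsNoVar i), ?_⟩
  have h2 : GVDAux.comp y 1 (X y * u) = X y * u := by
    apply GVDAux.comp_of_homog
    intro b hb
    obtain ⟨b1, hb1, b2, hb2, rfl⟩ := Finset.mem_add.mp (MvPolynomial.support_mul _ _ hb)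
    rw [MvPolynomial.support_X, Finset.mem_singleton] at hb1
    rw [Finsupp.add_apply, hb1, hnov b2 hb2, Finsupp.single_eq_same]
  have h1 : X y * u = ∑ i, GVDAux.comp y 1 (cc i * (g i : MvPolynomial (Fin (n + 1)) κ)) := by
    rw [← h2, ← hsum]
    simp only [smul_eq_mul]
    exact GVDAux.comp_sum y 1 Finset.univ _
  rw [h1]
  have h3 : (∑ i, GVDAux.comp y 1 (cc i * (g i : MvPolynomial (Fin (n + 1)) κ))) + ∑ i, s i
      = ∑ i, F i := by
    rw [← Finset.sum_add_distrib]
    exact Finset.sum_congr rfl fun i _ => hFs i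
  rw [h3]
  exact Ideal.sum_mem I fun i _ => hFI i
end

section
/- Let I be an ideal of S such that in_{x_n}(I) = C(x_n,I) ∩ (N(x_n,I) + (x_n)) is a nondegenerate geometric vertex decomposition, and suppose N(x_n,I) has no embedded primes. Let u ∈ C(x_n,I) and s ∈ S have no term divisible by x_n and suppose v := x_n·u + s ∈ I. Then for every i ∈ I there exist c ∈ C(x_n,I) and m ∈ N(x_n,I) such that i·u = v·c + m. -/
open MvPolynomial

section GVDAux

variable {κ : Type*} [Field κ] {σ : Type*} [DecidableEq σ]

/-- The `y`-degree-`t` homogeneous component of `f`. -/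
noncomputable def compY (y : σ) (t : ℕ) (f : MvPolynomial σ κ) : MvPolynomial σ κ :=
  ∑ b ∈ f.support, if (b : σ →₀ ℕ) y = t then MvPolynomial.monomial b (f.coeff b) else 0

lemma coeff_compY (y : σ) (t : ℕ) (f : MvPolynomial σ κ) (b : σ →₀ ℕ) :
    coeff b (compY y t f) = if b y = t then coeff b f else 0 := by
  classical
  unfold compY
  rw [MvPolynomial.coeff_sum]
  have h1 : ∀ b' ∈ f.support,
      coeff b (if (b' : σ →₀ ℕ) y = t then MvPolynomial.monomial b' (f.coeff b') else 0)
        = if b' = b then (if b y = t then coeff b f else 0) else 0 := by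
    intro b' _
    rcases eq_or_ne b' b with rfl | hne
    · split_ifs <;> simp_all [coeff_monomial]
    · split_ifs with h h' <;> simp [coeff_monomial, hne]
  rw [Finset.sum_congr rfl h1, Finset.sum_ite_eq' f.support b
    (fun _ => if b y = t then coeff b f else 0)]
  by_cases hb : b ∈ f.support
  · simp [hb]
  · simp only [hb, if_false]
    rw [MvPolynomial.notMem_support_iff.mp hb]
    simp

lemma compY_zero (y : σ) (t : ℕ) : compY y t (0 : MvPolynomial σ κ) = 0 := by
  unfold compY; simp

lemma inY_eq_compY (y : σ) (f : MvPolynomial σ κ) :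
    inY y f = compY y (degreeOf y f) f := rfl

lemma inY_zero (y : σ) : inY y (0 : MvPolynomial σ κ) = 0 := by
  rw [inY_eq_compY, compY_zero]

lemma coeff_inY (y : σ) (f : MvPolynomial σ κ) (b : σ →₀ ℕ) :
    coeff b (inY y f) = if b y = degreeOf y f then coeff b f else 0 := by
  rw [inY_eq_compY, coeff_compY]

lemma le_degreeOf {y : σ} {f : MvPolynomial σ κ} {b : σ →₀ ℕ} (hb : b ∈ f.support) :
    b y ≤ degreeOf y f := by
  rw [degreeOf_eq_sup]; exact Finset.le_sup (f := fun m : σ →₀ ℕ => m y) hb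

lemma degreeOf_le_of_coeff {y : σ} {f : MvPolynomial σ κ} {d : ℕ}
    (h : ∀ b : σ →₀ ℕ, coeff b f ≠ 0 → b y ≤ d) : degreeOf y f ≤ d :=
  degreeOf_le_iff.mpr fun b hb => h b (mem_support_iff.mp hb)

lemma exists_coeff_top {y : σ} {f : MvPolynomial σ κ} (hf : f ≠ 0) :
    ∃ b : σ →₀ ℕ, coeff b f ≠ 0 ∧ b y = degreeOf y f := by
  obtain ⟨b, hb, he⟩ := Finset.exists_mem_eq_sup f.support
    (MvPolynomial.support_nonempty.mpr hf) (fun m : σ →₀ ℕ => m y)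
  exact ⟨b, mem_support_iff.mp hb, by rw [degreeOf_eq_sup]; exact he.symm⟩

lemma inY_ne_zero {y : σ} {f : MvPolynomial σ κ} (hf : f ≠ 0) : inY y f ≠ 0 := by
  obtain ⟨b, hb, hby⟩ := exists_coeff_top (y := y) hf
  exact MvPolynomial.ne_zero_iff.mpr ⟨b, by rw [coeff_inY, if_pos hby]; exact hb⟩

lemma compY_add (y : σ) (t : ℕ) (f g : MvPolynomial σ κ) :
    compY y t (f + g) = compY y t f + compY y t g := by
  ext b
  simp only [coeff_compY, coeff_add]
  split_ifs <;> simp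

lemma compY_compY_self (y : σ) (t : ℕ) (f : MvPolynomial σ κ) :
    compY y t (compY y t f) = compY y t f := by
  ext b
  simp only [coeff_compY]
  split_ifs <;> rfl

lemma compY_compY_ne (y : σ) {t t' : ℕ} (h : t ≠ t') (f : MvPolynomial σ κ) :
    compY y t (compY y t' f) = 0 := by
  ext b
  simp only [coeff_compY, coeff_zero]
  split_ifs with h1 h2 <;> try rfl
  exact absurd (h1.symm.trans h2) h

lemma compY_monomial_mul (y : σ) {t : ℕ} {b0 : σ →₀ ℕ} (c : κ) (f : MvPolynomial σ κ)
    (hle : b0 y ≤ t) :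
    compY y t (MvPolynomial.monomial b0 c * f) =
      MvPolynomial.monomial b0 c * compY y (t - b0 y) f := by
  ext b
  rw [coeff_compY, coeff_monomial_mul', coeff_monomial_mul', coeff_compY]
  by_cases hb : b0 ≤ b
  · have hby : b0 y ≤ b y := (Finsupp.le_def.mp hb) y
    rw [if_pos hb, if_pos hb, Finsupp.tsub_apply]
    by_cases ht : b y = t
    · rw [if_pos ht, if_pos (by omega)]
    · rw [if_neg ht, if_neg (by omega), mul_zero]
  · rw [if_neg hb]
    split_ifs <;> simp

lemma compY_monomial_mul_lt (y : σ) {t : ℕ} {b0 : σ →₀ ℕ} (c : κ) (f : MvPolynomial σ κ)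
    (hlt : t < b0 y) :
    compY y t (MvPolynomial.monomial b0 c * f) = 0 := by
  ext b
  rw [coeff_compY, coeff_zero]
  by_cases ht : b y = t
  · rw [if_pos ht, coeff_monomial_mul']
    have : ¬ b0 ≤ b := fun hb => by
      have := (Finsupp.le_def.mp hb) y; omega
    rw [if_neg this]
  · rw [if_neg ht]

lemma coeff_eq_zero_of_noVar {y : σ} {f : MvPolynomial σ κ} (h : NoVar y f)
    {b : σ →₀ ℕ} (hb : b y ≠ 0) : coeff b f = 0 := by
  by_contra hc
  exact hb (h b (mem_support_iff.mpr hc))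

lemma compY_zero_of_noVar {y : σ} {f : MvPolynomial σ κ} (h : NoVar y f) :
    compY y 0 f = f := by
  ext b
  rw [coeff_compY]
  by_cases hb : b y = 0
  · rw [if_pos hb]
  · rw [if_neg hb, coeff_eq_zero_of_noVar h hb]

lemma noVar_mul {y : σ} {f g : MvPolynomial σ κ} (hf : NoVar y f) (hg : NoVar y g) :
    NoVar y (f * g) := by
  intro b hb
  have hmem := MvPolynomial.support_mul f g hb
  rw [Finset.mem_add] at hmem
  obtain ⟨b1, hb1, b2, hb2, rfl⟩ := hmem
  rw [Finsupp.add_apply, hf b1 hb1, hg b2 hb2]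

lemma noVar_sub {y : σ} {f g : MvPolynomial σ κ} (hf : NoVar y f) (hg : NoVar y g) :
    NoVar y (f - g) := by
  intro b hb
  by_contra hby
  rw [mem_support_iff, coeff_sub, coeff_eq_zero_of_noVar hf hby,
    coeff_eq_zero_of_noVar hg hby, sub_zero] at hb
  exact hb rfl

lemma degreeOf_monomial_mul {y : σ} {b0 : σ →₀ ℕ} {c : κ} {f : MvPolynomial σ κ}
    (hc : c ≠ 0) (hf : f ≠ 0) :
    degreeOf y (MvPolynomial.monomial b0 c * f) = b0 y + degreeOf y f := by
  apply le_antisymm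
  · apply degreeOf_le_of_coeff
    intro b hb
    rw [coeff_monomial_mul'] at hb
    by_cases hle : b0 ≤ b
    · rw [if_pos hle] at hb
      have h1 : coeff (b - b0) f ≠ 0 := fun h => hb (by rw [h, mul_zero])
      have h2 : (b - b0) y ≤ degreeOf y f := le_degreeOf (mem_support_iff.mpr h1)
      have h3 : b0 y ≤ b y := (Finsupp.le_def.mp hle) y
      rw [Finsupp.tsub_apply] at h2
      omega
    · rw [if_neg hle] at hb; exact absurd rfl hb
  · obtain ⟨b, hb, hby⟩ := exists_coeff_top (y := y) hf
    have : coeff (b0 + b) (MvPolynomial.monomial b0 c * f) ≠ 0 := by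
      rw [coeff_monomial_mul]
      exact mul_ne_zero hc hb
    have h2 := le_degreeOf (y := y) (mem_support_iff.mpr this)
    rw [Finsupp.add_apply, hby] at h2
    exact h2

lemma inY_monomial_mul {y : σ} {b0 : σ →₀ ℕ} {c : κ} {f : MvPolynomial σ κ}
    (hc : c ≠ 0) (hf : f ≠ 0) :
    inY y (MvPolynomial.monomial b0 c * f) = MvPolynomial.monomial b0 c * inY y f := by
  rw [inY_eq_compY, inY_eq_compY, degreeOf_monomial_mul hc hf,
    compY_monomial_mul y c f (Nat.le_add_right _ _), Nat.add_sub_cancel_left]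

/-- The lifting property: every `y`-homogeneous component of an element of `in_y(I)`
is either zero or the initial form of an element of `I`. -/
def LiftP (y : σ) (I : Ideal (MvPolynomial σ κ)) (h : MvPolynomial σ κ) : Prop :=
  ∀ t : ℕ, compY y t h = 0 ∨ ∃ f ∈ I, degreeOf y f = t ∧ inY y f = compY y t h

lemma liftP_add {y : σ} {I : Ideal (MvPolynomial σ κ)} {h1 h2 : MvPolynomial σ κ}
    (H1 : LiftP y I h1) (H2 : LiftP y I h2) : LiftP y I (h1 + h2) := by
  intro t
  rw [compY_add]
  rcases H1 t with e1 | ⟨f1, hf1, hd1, he1⟩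
  · rw [e1, zero_add]; exact H2 t
  rcases H2 t with e2 | ⟨f2, hf2, hd2, he2⟩
  · rw [e2, add_zero]; exact Or.inr ⟨f1, hf1, hd1, he1⟩
  by_cases hz : compY y t h1 + compY y t h2 = 0
  · exact Or.inl hz
  right
  have hc1 : compY y t f1 = compY y t h1 := by
    rw [← he1, inY_eq_compY, hd1]
  have hc2 : compY y t f2 = compY y t h2 := by
    rw [← he2, inY_eq_compY, hd2]
  have hcs : compY y t (f1 + f2) = compY y t h1 + compY y t h2 := by
    rw [compY_add, hc1, hc2]
  refine ⟨f1 + f2, I.add_mem hf1 hf2, ?_, ?_⟩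
  · have hne : compY y t (f1 + f2) ≠ 0 := by rw [hcs]; exact hz
    obtain ⟨b, hb⟩ := MvPolynomial.ne_zero_iff.mp hne
    rw [coeff_compY] at hb
    have hbt : b y = t ∧ coeff b (f1 + f2) ≠ 0 := by
      by_cases h : b y = t
      · exact ⟨h, by rwa [if_pos h] at hb⟩
      · rw [if_neg h] at hb; exact absurd rfl hb
    have hge : t ≤ degreeOf y (f1 + f2) := by
      rw [← hbt.1]; exact le_degreeOf (mem_support_iff.mpr hbt.2)
    have hle : degreeOf y (f1 + f2) ≤ t :=
      (MvPolynomial.degreeOf_add_le y f1 f2).trans (by rw [hd1, hd2, max_self])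
    exact le_antisymm hle hge
  · have hne : compY y t (f1 + f2) ≠ 0 := by rw [hcs]; exact hz
    obtain ⟨b, hb⟩ := MvPolynomial.ne_zero_iff.mp hne
    rw [coeff_compY] at hb
    have hbt : b y = t ∧ coeff b (f1 + f2) ≠ 0 := by
      by_cases h : b y = t
      · exact ⟨h, by rwa [if_pos h] at hb⟩
      · rw [if_neg h] at hb; exact absurd rfl hb
    have hge : t ≤ degreeOf y (f1 + f2) := by
      rw [← hbt.1]; exact le_degreeOf (mem_support_iff.mpr hbt.2)
    have hle : degreeOf y (f1 + f2) ≤ t :=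
      (MvPolynomial.degreeOf_add_le y f1 f2).trans (by rw [hd1, hd2, max_self])
    rw [inY_eq_compY, le_antisymm hle hge, hcs]

lemma liftP_monomial_mul {y : σ} {I : Ideal (MvPolynomial σ κ)} {h : MvPolynomial σ κ}
    (b0 : σ →₀ ℕ) (c : κ) (H : LiftP y I h) : LiftP y I (MvPolynomial.monomial b0 c * h) := by
  intro t
  rcases le_or_gt (b0 y) t with hle | hlt
  · rw [compY_monomial_mul y c h hle]
    rcases H (t - b0 y) with e0 | ⟨f, hf, hd, he⟩
    · left; rw [e0, mul_zero]
    by_cases hc : c = 0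
    · left; subst hc; simp
    by_cases hcz : compY y (t - b0 y) h = 0
    · left; rw [hcz, mul_zero]
    have hf0 : f ≠ 0 := by
      rintro rfl
      rw [inY_zero] at he
      exact hcz he.symm
    right
    refine ⟨MvPolynomial.monomial b0 c * f, I.mul_mem_left _ hf, ?_, ?_⟩
    · rw [degreeOf_monomial_mul hc hf0, hd]; omega
    · rw [inY_monomial_mul hc hf0, he]
  · left; exact compY_monomial_mul_lt y c h hlt

lemma liftP_inY {y : σ} {I : Ideal (MvPolynomial σ κ)} {f0 : MvPolynomial σ κ}
    (hf0 : f0 ∈ I) : LiftP y I (inY y f0) := by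
  intro t
  by_cases h0 : f0 = 0
  · subst h0; left; rw [inY_zero, compY_zero]
  rcases eq_or_ne t (degreeOf y f0) with rfl | hne
  · right
    exact ⟨f0, hf0, rfl, by rw [inY_eq_compY, compY_compY_self]⟩
  · left
    rw [inY_eq_compY, compY_compY_ne y hne]

lemma initial_lift {y : σ} {I : Ideal (MvPolynomial σ κ)} {h : MvPolynomial σ κ}
    (hh : h ∈ inYIdeal y I) : LiftP y I h := by
  unfold inYIdeal at hh
  refine Submodule.span_induction ?_ ?_ ?_ ?_ hh
  · rintro g ⟨f0, hf0, rfl⟩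
    exact liftP_inY hf0
  · intro t; left; exact compY_zero y t
  · intro a b _ _ ha hb; exact liftP_add ha hb
  · intro a x _ hx
    rw [smul_eq_mul]
    induction a using MvPolynomial.induction_on' with
    | monomial b0 c => exact liftP_monomial_mul b0 c hx
    | add p q hp hq => rw [add_mul]; exact liftP_add hp hq

lemma exists_topCoeff (y : σ) (f : MvPolynomial σ κ) :
    ∃ q : MvPolynomial σ κ, NoVar y q ∧ X y ^ (degreeOf y f) * q = inY y f := by
  classical
  refine ⟨∑ b ∈ (inY y f).support,
    MvPolynomial.monomial (b - Finsupp.single y (degreeOf y f)) ((inY y f).coeff b), ?_, ?_⟩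
  · intro b hb
    rw [mem_support_iff, MvPolynomial.coeff_sum] at hb
    obtain ⟨b', hb'mem, hb'⟩ := Finset.exists_ne_zero_of_sum_ne_zero hb
    rw [coeff_monomial] at hb'
    have hbe : b' - Finsupp.single y (degreeOf y f) = b := by
      by_contra hne
      rw [if_neg hne] at hb'
      exact hb' rfl
    have hb'y : b' y = degreeOf y f := by
      rw [mem_support_iff, coeff_inY] at hb'mem
      by_contra hne
      rw [if_neg hne] at hb'mem
      exact hb'mem rfl
    rw [← hbe, Finsupp.tsub_apply, Finsupp.single_eq_same, hb'y, Nat.sub_self]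
  · rw [Finset.mul_sum]
    rw [Finset.sum_congr rfl (fun b hb => ?_), MvPolynomial.support_sum_monomial_coeff]
    have hb'y : b y = degreeOf y f := by
      rw [mem_support_iff, coeff_inY] at hb
      by_contra hne
      rw [if_neg hne] at hb
      exact hb rfl
    have hle : Finsupp.single y (degreeOf y f) ≤ b :=
      Finsupp.single_le_iff.mpr (le_of_eq hb'y.symm)
    rw [X_pow_eq_monomial, MvPolynomial.monomial_mul, one_mul, add_tsub_cancel_of_le hle]

lemma exists_lift_deg_one (y : σ) {I : Ideal (MvPolynomial σ κ)} {q : MvPolynomial σ κ}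
    (hq0 : q ≠ 0) (hqv : NoVar y q) (hmem : X y * q ∈ inYIdeal y I) :
    ∃ f ∈ I, ∃ r : MvPolynomial σ κ, NoVar y r ∧ f = X y * q + r := by
  have hX : (X y : MvPolynomial σ κ) = MvPolynomial.monomial (Finsupp.single y 1) 1 := by
    rw [← pow_one (X y : MvPolynomial σ κ), X_pow_eq_monomial]
  have hcomp : compY y 1 (X y * q) = X y * q := by
    rw [hX, compY_monomial_mul y 1 q (by rw [Finsupp.single_eq_same]),
      Finsupp.single_eq_same, Nat.sub_self, compY_zero_of_noVar hqv]
  have hne : compY y 1 (X y * q) ≠ 0 := by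
    rw [hcomp]
    exact mul_ne_zero (MvPolynomial.X_ne_zero y) hq0
  rcases initial_lift hmem 1 with h0 | ⟨f, hfI, hdf, hef⟩
  · exact absurd h0 hne
  rw [hcomp] at hef
  refine ⟨f, hfI, f - X y * q, ?_, by ring⟩
  intro b hb
  rw [mem_support_iff, coeff_sub, ← hef] at hb
  by_contra hby
  rcases eq_or_ne (b y) (degreeOf y f) with hb1 | hb1
  · rw [coeff_inY, if_pos hb1, sub_self] at hb
    exact hb rfl
  · rw [coeff_inY, if_neg hb1, sub_zero] at hb
    have := le_degreeOf (y := y) (mem_support_iff.mpr hb)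
    rw [hdf] at hb1 this
    omega

lemma coeff_X_pow_mul' (y : σ) (k : ℕ) (g : MvPolynomial σ κ) (b : σ →₀ ℕ) :
    coeff b ((X y : MvPolynomial σ κ) ^ k * g)
      = if Finsupp.single y k ≤ b then coeff (b - Finsupp.single y k) g else 0 := by
  rw [X_pow_eq_monomial, coeff_monomial_mul']
  split_ifs
  · rw [one_mul]
  · rfl

lemma coeff_X_mul_noVar {y : σ} {q : MvPolynomial σ κ} (hqv : NoVar y q) (b : σ →₀ ℕ) :
    coeff b (X y * q) = if b y = 1 then coeff (b - Finsupp.single y 1) q else 0 := by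
  rw [← pow_one (X y : MvPolynomial σ κ), coeff_X_pow_mul']
  by_cases h1 : b y = 1
  · rw [if_pos (Finsupp.single_le_iff.mpr (by omega)), if_pos h1]
  · rw [if_neg h1]
    by_cases hle : Finsupp.single y 1 ≤ b
    · rw [if_pos hle]
      apply coeff_eq_zero_of_noVar hqv
      have h2 := Finsupp.single_le_iff.mp hle
      rw [Finsupp.tsub_apply, Finsupp.single_eq_same]
      omega
    · rw [if_neg hle]

end GVDAux

/-- Part (5): if `u ∈ C(x_n,I)` and `s` have no term divisible by `x_n` and
`v := x_n·u + s ∈ I`, then for every `i ∈ I` there are `c ∈ C(x_n,I)` and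
`m ∈ N(x_n,I)` with `i·u = v·c + m`. -/
theorem gvd_part5 {p : ℕ} [Fact p.Prime] {κ : Type*} [Field κ] [CharP κ p] [PerfectRing κ p]
    {n : ℕ} (I : Ideal (MvPolynomial (Fin (n + 1)) κ))
    (hgvd : IsNondegGVD (Fin.last n) I)
    (hemb : NoEmbeddedPrimes (Nyd (Fin.last n) I))
    (u s : MvPolynomial (Fin (n + 1)) κ)
    (huC : u ∈ Cyd (Fin.last n) I)
    (hu : NoVar (Fin.last n) u) (hs : NoVar (Fin.last n) s)
    (hvI : X (Fin.last n) * u + s ∈ I) :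
    ∀ i ∈ I, ∃ c ∈ Cyd (Fin.last n) I, ∃ m ∈ Nyd (Fin.last n) I,
      i * u = (X (Fin.last n) * u + s) * c + m := by
  classical
  set y := Fin.last n with hy
  obtain ⟨⟨hGVDeq, -⟩, -, -⟩ := hgvd
  suffices H : ∀ d : ℕ, ∀ i ∈ I, degreeOf y i ≤ d →
      ∃ c ∈ Cyd y I, ∃ m ∈ Nyd y I, i * u = (X y * u + s) * c + m by
    intro i hi
    exact H (degreeOf y i) i hi le_rfl
  intro d
  induction d with
  | zero =>
    intro i hi hdeg
    have hNi : i ∈ Nyd y I := by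
      apply Ideal.subset_span
      refine ⟨hi, fun b hb => ?_⟩
      have h := le_degreeOf (y := y) hb
      omega
    exact ⟨0, (Cyd y I).zero_mem, i * u, (Nyd y I).mul_mem_right u hNi, by ring⟩
  | succ d ih =>
    intro i hi hdeg
    rcases Nat.lt_or_ge (degreeOf y i) (d + 1) with hlt | hge
    · exact ih i hi (Nat.lt_succ_iff.mp hlt)
    have hdeq : degreeOf y i = d + 1 := le_antisymm hdeg hge
    have hi0 : i ≠ 0 := by
      rintro rfl
      rw [degreeOf_zero] at hdeq
      exact Nat.succ_ne_zero d hdeq.symm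
    obtain ⟨q, hqv, hqe⟩ := exists_topCoeff y i
    rw [hdeq] at hqe
    have hInY_ne : inY y i ≠ 0 := inY_ne_zero hi0
    have hq0 : q ≠ 0 := by
      rintro rfl
      rw [mul_zero] at hqe
      exact hInY_ne hqe.symm
    have hqC : q ∈ Cyd y I := by
      show ∃ k : ℕ, X y ^ k * q ∈ inYIdeal y I
      exact ⟨d + 1, by rw [hqe]; exact Ideal.subset_span ⟨i, hi, rfl⟩⟩
    have hXqIn : X y * q ∈ inYIdeal y I := by
      rw [hGVDeq]
      refine Submodule.mem_inf.mpr ⟨(Cyd y I).mul_mem_left _ hqC, ?_⟩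
      rw [Submodule.add_eq_sup]
      exact Submodule.mem_sup_right
        (Ideal.mem_span_singleton.mpr (dvd_mul_right (X y) q))
    obtain ⟨f, hfI, r, hrv, hfe⟩ := exists_lift_deg_one y hq0 hqv hXqIn
    set i' := i - X y ^ d * f with hi'def
    have hi'I : i' ∈ I := Ideal.sub_mem I hi (I.mul_mem_left _ hfI)
    have hcoefff : ∀ b : Fin (n + 1) →₀ ℕ, coeff b f
        = (if b y = 1 then coeff (b - Finsupp.single y 1) q else 0) + coeff b r := by
      intro b
      rw [hfe, coeff_add, coeff_X_mul_noVar hqv]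
    have hi'deg : degreeOf y i' ≤ d := by
      apply degreeOf_le_of_coeff
      intro b hb
      by_contra hgt
      push_neg at hgt
      apply hb
      rw [hi'def, coeff_sub, coeff_X_pow_mul']
      rcases eq_or_ne (b y) (d + 1) with hby | hby
      · have hle1 : Finsupp.single y d ≤ b := Finsupp.single_le_iff.mpr (by omega)
        rw [if_pos hle1]
        have h1 : coeff b i = coeff (b - Finsupp.single y (d + 1)) q := by
          have h0 : coeff b i = coeff b (inY y i) := by
            rw [coeff_inY, hdeq, if_pos hby]
          rw [h0, ← hqe, coeff_X_pow_mul',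
            if_pos (Finsupp.single_le_iff.mpr (by omega))]
        have hsy : (b - Finsupp.single y d) y = 1 := by
          rw [Finsupp.tsub_apply, Finsupp.single_eq_same]; omega
        have h2 : coeff (b - Finsupp.single y d) f
            = coeff (b - Finsupp.single y (d + 1)) q := by
          rw [hcoefff, if_pos hsy, coeff_eq_zero_of_noVar hrv (by rw [hsy]; omega),
            add_zero, tsub_tsub, ← Finsupp.single_add]
        rw [h1, h2, sub_self]
      · have hbig : d + 1 < b y := by omega
        have h1 : coeff b i = 0 := by
          by_contra hne
          have h2 := le_degreeOf (y := y) (mem_support_iff.mpr hne)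
          omega
        rw [h1, zero_sub, neg_eq_zero]
        by_cases hle1 : Finsupp.single y d ≤ b
        · have hsy : (b - Finsupp.single y d) y = b y - d := by
            rw [Finsupp.tsub_apply, Finsupp.single_eq_same]
          rw [if_pos hle1, hcoefff, if_neg (by omega), zero_add,
            coeff_eq_zero_of_noVar hrv (by omega)]
        · rw [if_neg hle1]
    obtain ⟨c', hc'C, m', hm'N, heq⟩ := ih i' hi'I hi'deg
    have hm0I : f * u - (X y * u + s) * q ∈ I :=
      Ideal.sub_mem I (I.mul_mem_right u hfI) (I.mul_mem_right q hvI)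
    have hm0v : NoVar y (f * u - (X y * u + s) * q) := by
      have he : f * u - (X y * u + s) * q = r * u - s * q := by rw [hfe]; ring
      rw [he]
      exact noVar_sub (noVar_mul hrv hu) (noVar_mul hs hqv)
    have hm0N : f * u - (X y * u + s) * q ∈ Nyd y I := Ideal.subset_span ⟨hm0I, hm0v⟩
    refine ⟨c' + X y ^ d * q, Ideal.add_mem _ hc'C ((Cyd y I).mul_mem_left _ hqC),
      m' + X y ^ d * (f * u - (X y * u + s) * q),
      Ideal.add_mem _ hm'N ((Nyd y I).mul_mem_left _ hm0N), ?_⟩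
    have hic : i = i' + X y ^ d * f := by rw [hi'def]; ring
    calc i * u = i' * u + X y ^ d * f * u := by rw [hic]; ring
      _ = ((X y * u + s) * c' + m') + X y ^ d * f * u := by rw [heq]
      _ = (X y * u + s) * (c' + X y ^ d * q)
          + (m' + X y ^ d * (f * u - (X y * u + s) * q)) := by ring
end
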